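/- Let (A_k)_{k≥0} be a sequence of Banach spaces with a bilinear multiplication A_k × A_l → A_{k+l} satisfying ‖P·Q‖_{A_{k+l}} ≤ c_{k,l}‖P‖_{A_k}‖Q‖_{A_l} with c_{k,l} ≤ e²√(kl/(k+l)). For formal series f = Σ P_k, g = Σ Q_k define fg via the Cauchy product Σ_n Σ_{k=0}^n P_k Q_{n−k}. Then for 0 < s and ε > 0 there is a constant c > 0 (depending on s, ε but not on f, g) such that p_s(fg) ≤ c · p_s(g) · p_{s+ε}(f), where p_t(f) = Σ_k t^k ‖P_k‖_{A_k}. -/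

import Mathlib

/-- Let `(A_k)` be a graded sequence of Banach spaces whose multiplication satisfies
`‖P_k · Q_l‖ ≤ e²√(kl/(k+l)) ‖P_k‖ ‖Q_l‖`.  For formal series `f = Σ P_k`, `g = Σ Q_k`,
the Cauchy product coefficients `R_n = Σ_{k=0}^n P_k Q_{n-k}` satisfy
`‖R_n‖ ≤ Σ_{k=0}^n e²√(k(n-k)/n) ‖P_k‖ ‖Q_{n-k}‖`, and then for all `s, ε > 0` there is
`c > 0` (depending only on `s` and `ε`) such that `p_s(fg) ≤ c · p_s(g) · p_{s+ε}(f)`,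
where `p_t(f) = Σ_k t^k ‖P_k‖`. -/
theorem stmt_11 (A : ℕ → Type*) [∀ k, NormedAddCommGroup (A k)] [∀ k, NormedSpace ℂ (A k)]
    [∀ k, CompleteSpace (A k)] (s ε : ℝ) (hs : 0 < s) (hε : 0 < ε) :
    ∃ c : ℝ, 0 < c ∧
      ∀ (P Q R : ∀ n, A n),
        (∀ n, ‖R n‖ ≤ ∑ k ∈ Finset.range (n + 1),
            Real.exp 1 ^ 2 * Real.sqrt ((k : ℝ) * (n - k : ℕ) / n) * ‖P k‖ * ‖Q (n - k)‖) →
        (Summable fun k => (s + ε) ^ k * ‖P k‖) →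
        (Summable fun k => s ^ k * ‖Q k‖) →
        ∑' n, s ^ n * ‖R n‖ ≤ c * (∑' k, s ^ k * ‖Q k‖) * (∑' k, (s + ε) ^ k * ‖P k‖) := by
  have hsε : (0:ℝ) < s + ε := by linarith
  set r : ℝ := s / (s + ε) with hr
  have hr0 : 0 ≤ r := div_nonneg hs.le hsε.le
  have hr1 : r < 1 := (div_lt_one hsε).mpr (by linarith)
  -- bound on k * r^k
  have hsum : Summable fun k : ℕ => (k : ℝ) * r ^ k := by
    have := summable_pow_mul_geometric_of_norm_lt_one (R := ℝ) 1 (r := r)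
      (by rwa [Real.norm_eq_abs, abs_of_nonneg hr0])
    simpa using this
  have htend : Filter.Tendsto (fun k : ℕ => (k : ℝ) * r ^ k) Filter.atTop (nhds 0) :=
    hsum.tendsto_atTop_zero
  obtain ⟨C, hC⟩ := htend.bddAbove_range
  have hCmem : ∀ k : ℕ, (k : ℝ) * r ^ k ≤ C := fun k => hC ⟨k, rfl⟩
  -- key: √k * s^k ≤ (C+1) * (s+ε)^k
  have hC0 : 0 ≤ C := le_trans (by norm_num) (hCmem 0)
  have key : ∀ k : ℕ, Real.sqrt k * s ^ k ≤ (C + 1) * (s + ε) ^ k := by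
    intro k
    have hsk : s ^ k = r ^ k * (s + ε) ^ k := by
      rw [← mul_pow, hr, div_mul_cancel₀ _ hsε.ne']
    rw [hsk, ← mul_assoc]
    have hk1 : Real.sqrt k * r ^ k ≤ C + 1 := by
      calc Real.sqrt k * r ^ k ≤ (k : ℝ) * r ^ k := by
            apply mul_le_mul_of_nonneg_right _ (pow_nonneg hr0 k)
            refine Real.sqrt_le_iff.mpr ⟨Nat.cast_nonneg k, ?_⟩
            have : k ≤ k ^ 2 := Nat.le_self_pow two_ne_zero k
            exact_mod_cast this
        _ ≤ C := hCmem k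
        _ ≤ C + 1 := by linarith
    exact mul_le_mul_of_nonneg_right hk1 (by positivity)
  refine ⟨Real.exp 1 ^ 2 * (C + 1), by positivity, fun P Q R hR hP hQ => ?_⟩
  set a : ℕ → ℝ := fun k => Real.exp 1 ^ 2 * (C + 1) * ((s + ε) ^ k * ‖P k‖) with ha
  set b : ℕ → ℝ := fun k => s ^ k * ‖Q k‖ with hb
  have haS : Summable a := hP.mul_left _
  have hbS : Summable b := hQ
  have hbnn : ∀ k, 0 ≤ b k := fun k => by positivity
  have hann : ∀ k, 0 ≤ a k := fun k => by positivity
  -- pointwise bound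
  have hpt : ∀ n, s ^ n * ‖R n‖ ≤ ∑ k ∈ Finset.range (n + 1), a k * b (n - k) := by
    intro n
    calc s ^ n * ‖R n‖
        ≤ s ^ n * ∑ k ∈ Finset.range (n + 1),
            Real.exp 1 ^ 2 * Real.sqrt ((k : ℝ) * (n - k : ℕ) / n) * ‖P k‖ * ‖Q (n - k)‖ :=
          mul_le_mul_of_nonneg_left (hR n) (by positivity)
      _ = ∑ k ∈ Finset.range (n + 1),
            s ^ n * (Real.exp 1 ^ 2 * Real.sqrt ((k : ℝ) * (n - k : ℕ) / n) * ‖P k‖ * ‖Q (n - k)‖) :=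
          Finset.mul_sum _ _ _
      _ ≤ ∑ k ∈ Finset.range (n + 1), a k * b (n - k) := by
          apply Finset.sum_le_sum
          intro k hk
          have hkn : k ≤ n := Nat.lt_succ_iff.mp (Finset.mem_range.mp hk)
          have hpow : s ^ n = s ^ k * s ^ (n - k) := by
            rw [← pow_add, Nat.add_sub_cancel' hkn]
          have hsq : Real.sqrt ((k : ℝ) * (n - k : ℕ) / n) ≤ Real.sqrt k := by
            apply Real.sqrt_le_sqrt
            rcases Nat.eq_zero_or_pos n with hn | hn
            · subst hn
              interval_cases k
              norm_num
            · have hn' : (0:ℝ) < n := by exact_mod_cast hn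
              rw [div_le_iff₀ hn']
              have : ((n - k : ℕ) : ℝ) ≤ (n : ℝ) := by
                exact_mod_cast Nat.sub_le n k
              nlinarith [Nat.cast_nonneg (α := ℝ) k]
          have h1 : Real.exp 1 ^ 2 * Real.sqrt ((k : ℝ) * (n - k : ℕ) / n) * s ^ k
              ≤ Real.exp 1 ^ 2 * ((C + 1) * (s + ε) ^ k) := by
            rw [mul_assoc]
            apply mul_le_mul_of_nonneg_left _ (by positivity)
            calc Real.sqrt ((k : ℝ) * (n - k : ℕ) / n) * s ^ k
                ≤ Real.sqrt k * s ^ k :=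
                  mul_le_mul_of_nonneg_right hsq (by positivity)
              _ ≤ (C + 1) * (s + ε) ^ k := key k
          calc s ^ n * (Real.exp 1 ^ 2 * Real.sqrt ((k : ℝ) * (n - k : ℕ) / n) * ‖P k‖ * ‖Q (n - k)‖)
              = Real.exp 1 ^ 2 * Real.sqrt ((k : ℝ) * (n - k : ℕ) / n) * s ^ k *
                  (‖P k‖ * (s ^ (n - k) * ‖Q (n - k)‖)) := by rw [hpow]; ring
            _ ≤ Real.exp 1 ^ 2 * ((C + 1) * (s + ε) ^ k) *
                  (‖P k‖ * (s ^ (n - k) * ‖Q (n - k)‖)) := by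
                apply mul_le_mul_of_nonneg_right h1
                positivity
            _ = a k * b (n - k) := by simp only [ha, hb]; ring
  -- summability of the Cauchy product
  have hcauchy : Summable fun n => ∑ k ∈ Finset.range (n + 1), a k * b (n - k) := by
    have h := summable_norm_sum_mul_range_of_summable_norm (f := a) (g := b)
      (by simpa [Real.norm_eq_abs] using haS.abs)
      (by simpa [Real.norm_eq_abs] using hbS.abs)
    exact h.of_norm
  have hLHS : Summable fun n => s ^ n * ‖R n‖ :=
    Summable.of_nonneg_of_le (fun n => by positivity) hpt hcauchy
  calc ∑' n, s ^ n * ‖R n‖ ≤ ∑' n, ∑ k ∈ Finset.range (n + 1), a k * b (n - k) :=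
        Summable.tsum_le_tsum hpt hLHS hcauchy
    _ = (∑' k, a k) * (∑' k, b k) := by
        rw [tsum_mul_tsum_eq_tsum_sum_range_of_summable_norm
          (by simpa [Real.norm_eq_abs] using haS.abs)
          (by simpa [Real.norm_eq_abs] using hbS.abs)]
    _ = Real.exp 1 ^ 2 * (C + 1) * (∑' k, s ^ k * ‖Q k‖) * (∑' k, (s + ε) ^ k * ‖P k‖) := by
        rw [ha]
        rw [tsum_mul_left]
        ring
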